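/- For every real x, | H₂(Q(x)) − ( log 2 − x²/π ) | ≤ (4(π−1)/(3π²)) · x⁴. -/

import Mathlib

/-- Binary entropy function with natural logarithm. -/
noncomputable def binH (q : ℝ) : ℝ := -q * Real.log q - (1 - q) * Real.log (1 - q)

/-- The standard Gaussian upper-tail function `Q(x) = ∫_x^∞ (1/√(2π)) e^{−t²/2} dt`. -/
noncomputable def gaussQ (x : ℝ) : ℝ :=
  ∫ t in Set.Ici x, (Real.sqrt (2 * Real.pi))⁻¹ * Real.exp (-t ^ 2 / 2)


open Real Set MeasureTheory

noncomputable def gfun (E : ℝ) : ℝ :=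
  ((1 - E) * Real.log (1 - E) + (1 + E) * Real.log (1 + E)) / 2

lemma hasDerivAt_gfun {E : ℝ} (h1 : -1 < E) (h2 : E < 1) :
    HasDerivAt gfun ((Real.log (1 + E) - Real.log (1 - E)) / 2) E := by
  have h1' : (1:ℝ) - E ≠ 0 := by linarith
  have h2' : (1:ℝ) + E ≠ 0 := by linarith
  have d1 : HasDerivAt (fun t : ℝ => 1 - t) (-1) E := (hasDerivAt_id E).const_sub 1
  have d2 : HasDerivAt (fun t : ℝ => 1 + t) 1 E := (hasDerivAt_id E).const_add 1
  have dlog1 : HasDerivAt (fun t : ℝ => Real.log (1 - t)) (-1 / (1 - E)) E := d1.log h1'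
  have dlog2 : HasDerivAt (fun t : ℝ => Real.log (1 + t)) (1 / (1 + E)) E := d2.log h2'
  have dm1 := d1.mul dlog1
  have dm2 := d2.mul dlog2
  have := (dm1.add dm2).div_const 2
  refine this.congr_deriv ?_
  field_simp
  ring

/-- If `f 0 = 0` and `f` has nonnegative derivative on `[0,b]`, then `0 ≤ f b`. -/
lemma nonneg_of_hasDerivAt {f f' : ℝ → ℝ} {b : ℝ} (hb : 0 ≤ b)
    (hd : ∀ t ∈ Set.Icc (0:ℝ) b, HasDerivAt f (f' t) t)
    (h0 : f 0 = 0) (hf' : ∀ t ∈ Set.Icc (0:ℝ) b, 0 ≤ f' t) : 0 ≤ f b := by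
  have hmono : MonotoneOn f (Set.Icc 0 b) := by
    apply monotoneOn_of_deriv_nonneg (convex_Icc 0 b)
    · exact fun t ht => (hd t ht).continuousAt.continuousWithinAt
    · intro t ht
      exact ((hd t (interior_subset ht)).differentiableAt).differentiableWithinAt
    · intro t ht
      rw [(hd t (interior_subset ht)).deriv]
      exact hf' t (interior_subset ht)
  have := hmono (Set.left_mem_Icc.2 hb) (Set.right_mem_Icc.2 hb) hb
  linarith [this]

lemma log_diff_ge {t : ℝ} (h0 : 0 ≤ t) (h1 : t < 1) :
    2 * t ≤ Real.log (1 + t) - Real.log (1 - t) := by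
  have key : 0 ≤ Real.log (1 + t) - Real.log (1 - t) - 2 * t := by
    apply nonneg_of_hasDerivAt (f' := fun s => 1 / (1 + s) + 1 / (1 - s) - 2) h0
    · intro s hs
      have hs1 : (1:ℝ) + s ≠ 0 := by nlinarith [hs.1, hs.2]
      have hs2 : (1:ℝ) - s ≠ 0 := by nlinarith [hs.1, hs.2]
      have d2 : HasDerivAt (fun u : ℝ => 1 + u) 1 s := (hasDerivAt_id s).const_add 1
      have d1 : HasDerivAt (fun u : ℝ => 1 - u) (-1) s := (hasDerivAt_id s).const_sub 1
      have := ((d2.log hs1).sub (d1.log hs2)).sub ((hasDerivAt_id s).const_mul 2)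
      refine this.congr_deriv ?_
      field_simp
      ring
    · simp
    · intro s hs
      have hs1 : (0:ℝ) < 1 + s := by nlinarith [hs.1, hs.2]
      have hs2 : (0:ℝ) < 1 - s := by nlinarith [hs.1, hs.2]
      have h12 : 1 / (1 + s) + 1 / (1 - s) = 2 / ((1 + s) * (1 - s)) := by
        field_simp; ring
      rw [h12]
      have hprod : (0:ℝ) < (1 + s) * (1 - s) := by positivity
      have hle : (1 + s) * (1 - s) ≤ 1 := by nlinarith [hs.1]
      have : (2:ℝ) ≤ 2 / ((1 + s) * (1 - s)) := by
        rw [le_div_iff₀ hprod]; nlinarith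
      linarith
  linarith

lemma log_diff_le {t : ℝ} (h0 : 0 ≤ t) (h1 : t ^ 2 ≤ 7 / 9) :
    Real.log (1 + t) - Real.log (1 - t) ≤ 2 * t + 3 * t ^ 3 := by
  have ht1 : t < 1 := by nlinarith
  have key : 0 ≤ 2 * t + 3 * t ^ 3 - (Real.log (1 + t) - Real.log (1 - t)) := by
    apply nonneg_of_hasDerivAt
      (f' := fun s => 2 + 9 * s ^ 2 - (1 / (1 + s) + 1 / (1 - s))) h0
    · intro s hs
      have hs1 : (1:ℝ) + s ≠ 0 := by nlinarith [hs.1, hs.2]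
      have hs2 : (1:ℝ) - s ≠ 0 := by nlinarith [hs.1, hs.2, ht1]
      have d2 : HasDerivAt (fun u : ℝ => 1 + u) 1 s := (hasDerivAt_id s).const_add 1
      have d1 : HasDerivAt (fun u : ℝ => 1 - u) (-1) s := (hasDerivAt_id s).const_sub 1
      have dp : HasDerivAt (fun u : ℝ => 2 * u + 3 * u ^ 3) (2 + 9 * s ^ 2) s := by
        have := ((hasDerivAt_id s).const_mul 2).add
          (((hasDerivAt_pow 3 s)).const_mul 3)
        refine this.congr_deriv ?_
        ring
      have := dp.sub ((d2.log hs1).sub (d1.log hs2))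
      refine this.congr_deriv ?_
      field_simp
      ring
    · simp
    · intro s hs
      have hsq : s ^ 2 ≤ 7 / 9 := by nlinarith [hs.1, hs.2]
      have hs1 : (0:ℝ) < 1 + s := by nlinarith [hs.1]
      have hs2 : (0:ℝ) < 1 - s := by nlinarith
      have h12 : 1 / (1 + s) + 1 / (1 - s) = 2 / ((1 + s) * (1 - s)) := by
        field_simp; ring
      rw [h12]
      have hprod : (0:ℝ) < (1 + s) * (1 - s) := by positivity
      rw [sub_nonneg, div_le_iff₀ hprod]
      nlinarith [hs.1, sq_nonneg s]
  linarith

lemma gfun_ge {E : ℝ} (h0 : 0 ≤ E) (h1 : E < 1) : E ^ 2 / 2 ≤ gfun E := by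
  have key : 0 ≤ gfun E - E ^ 2 / 2 := by
    apply nonneg_of_hasDerivAt
      (f' := fun s => (Real.log (1 + s) - Real.log (1 - s)) / 2 - s) h0
    · intro s hs
      have hsa : -1 < s := by linarith [hs.1]
      have hsb : s < 1 := by linarith [hs.2]
      have dq : HasDerivAt (fun u : ℝ => u ^ 2 / 2) s s := by
        have := (hasDerivAt_pow 2 s).div_const 2
        refine this.congr_deriv ?_
        ring
      exact (hasDerivAt_gfun hsa hsb).sub dq
    · simp [gfun]
    · intro s hs
      have := log_diff_ge hs.1 (lt_of_le_of_lt hs.2 h1)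
      linarith
  linarith

lemma gfun_le {E : ℝ} (h0 : 0 ≤ E) (h1 : E ^ 2 ≤ 7 / 9) :
    gfun E ≤ E ^ 2 / 2 + 3 / 8 * E ^ 4 := by
  have hE1 : E < 1 := by nlinarith
  have key : 0 ≤ E ^ 2 / 2 + 3 / 8 * E ^ 4 - gfun E := by
    apply nonneg_of_hasDerivAt
      (f' := fun s => (s + 3 / 2 * s ^ 3) - (Real.log (1 + s) - Real.log (1 - s)) / 2) h0
    · intro s hs
      have hsa : -1 < s := by linarith [hs.1]
      have hsb : s < 1 := by linarith [hs.2]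
      have dp : HasDerivAt (fun u : ℝ => u ^ 2 / 2 + 3 / 8 * u ^ 4) (s + 3 / 2 * s ^ 3) s := by
        have := ((hasDerivAt_pow 2 s).div_const 2).add ((hasDerivAt_pow 4 s).const_mul (3/8))
        refine this.congr_deriv ?_
        ring
      have := dp.sub (hasDerivAt_gfun hsa hsb)
      exact this
    · simp [gfun]
    · intro s hs
      have hsq : s ^ 2 ≤ 7 / 9 := by nlinarith [hs.1, hs.2]
      have := log_diff_le hs.1 hsq
      linarith
  linarith

lemma gfun_le_log_two {E : ℝ} (h0 : 0 ≤ E) (h1 : E < 1) : gfun E ≤ Real.log 2 := by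
  have ha : (1 - E) * Real.log (1 - E) ≤ 0 := by
    apply mul_nonpos_of_nonneg_of_nonpos
    · linarith
    · exact Real.log_nonpos (by linarith) (by linarith)
  have hb : Real.log (1 + E) ≤ Real.log 2 := Real.log_le_log (by linarith) (by linarith)
  have hc : 0 ≤ Real.log (1 + E) := Real.log_nonneg (by linarith)
  have hd : (1 + E) * Real.log (1 + E) ≤ 2 * Real.log 2 := by nlinarith
  unfold gfun
  linarith

lemma binH_eq_gfun {q : ℝ} (h0 : 0 < q) (h1 : q < 1) :
    -q * Real.log q - (1 - q) * Real.log (1 - q) = Real.log 2 - gfun (1 - 2 * q) := by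
  have e1 : (1:ℝ) - (1 - 2 * q) = 2 * q := by ring
  have e2 : (1:ℝ) + (1 - 2 * q) = 2 * (1 - q) := by ring
  unfold gfun
  rw [e1, e2, Real.log_mul two_ne_zero (ne_of_gt h0),
      Real.log_mul two_ne_zero (by linarith : (1:ℝ) - q ≠ 0)]
  ring


open Real Set MeasureTheory

noncomputable def phi (t : ℝ) : ℝ := (Real.sqrt (2 * Real.pi))⁻¹ * Real.exp (-t ^ 2 / 2)

lemma gaussQ_eq (x : ℝ) : gaussQ x = ∫ t in Set.Ici x, phi t := rfl

lemma phi_pos (t : ℝ) : 0 < phi t := by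
  unfold phi
  have : (0:ℝ) < Real.sqrt (2 * Real.pi) := Real.sqrt_pos.2 (by positivity)
  positivity

lemma integrable_phi : Integrable phi := by
  have h : Integrable fun t : ℝ => Real.exp (-(1/2) * t ^ 2) :=
    integrable_exp_neg_mul_sq (by norm_num)
  have h2 : Integrable fun t : ℝ => Real.exp (-t ^ 2 / 2) := by
    convert h using 2 with t
    ring_nf
  exact h2.const_mul _

lemma integral_phi : ∫ t : ℝ, phi t = 1 := by
  have h : ∫ t : ℝ, Real.exp (-(1/2) * t ^ 2) = Real.sqrt (Real.pi / (1/2)) :=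
    integral_gaussian (1/2)
  have h2 : ∫ t : ℝ, Real.exp (-t ^ 2 / 2) = Real.sqrt (2 * Real.pi) := by
    rw [show (2:ℝ) * Real.pi = Real.pi / (1/2) by ring, ← h]
    congr 1 with t
    ring_nf
  unfold phi
  rw [integral_const_mul, h2]
  have : Real.sqrt (2 * Real.pi) ≠ 0 := ne_of_gt (Real.sqrt_pos.2 (by positivity))
  field_simp

lemma phi_even (t : ℝ) : phi (-t) = phi t := by unfold phi; rw [neg_pow]; ring_nf

lemma gaussQ_Iic (x : ℝ) : gaussQ x = 1 - ∫ t in Set.Iic x, phi t := by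
  have h := intervalIntegral.integral_Iio_add_Ici (b := x)
    (integrable_phi.integrableOn) (integrable_phi.integrableOn)
  rw [gaussQ_eq, MeasureTheory.integral_Iic_eq_integral_Iio]
  rw [integral_phi] at h
  linarith

lemma gaussQ_neg (x : ℝ) : gaussQ (-x) = 1 - gaussQ x := by
  have h1 : gaussQ (-x) = ∫ t in Set.Ioi (-x), phi t := by
    rw [gaussQ_eq, MeasureTheory.integral_Ici_eq_integral_Ioi]
  have h2 : (∫ t in Set.Iic x, phi (-t)) = ∫ t in Set.Ioi (-x), phi t :=
    integral_comp_neg_Iic x phi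
  simp_rw [phi_even] at h2
  rw [h1, ← h2, gaussQ_Iic]
  ring

lemma gaussQ_zero : gaussQ 0 = 1 / 2 := by
  have := gaussQ_neg 0
  rw [neg_zero] at this
  linarith

lemma gaussQ_pos (x : ℝ) : 0 < gaussQ x := by
  rw [gaussQ_eq]
  rw [MeasureTheory.setIntegral_pos_iff_support_of_nonneg_ae]
  · have : Function.support phi = Set.univ := by
      ext t; simp [Function.mem_support, ne_of_gt (phi_pos t)]
    rw [this, Set.univ_inter, Real.volume_Ici]
    exact ENNReal.zero_lt_top
  · exact Filter.Eventually.of_forall fun t => (phi_pos t).le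
  · exact integrable_phi.integrableOn

lemma gaussQ_lt_one (x : ℝ) : gaussQ x < 1 := by
  have := gaussQ_pos (-x)
  rw [gaussQ_neg] at this
  linarith

lemma gaussQ_sub (x : ℝ) : 1 - 2 * gaussQ x = 2 * ∫ t in (0:ℝ)..x, phi t := by
  have h := intervalIntegral.integral_Iic_sub_Iic (a := (0:ℝ)) (b := x)
    (f := phi) (μ := volume) integrable_phi.integrableOn integrable_phi.integrableOn
  have h0 := gaussQ_Iic 0
  have hx := gaussQ_Iic x
  rw [gaussQ_zero] at h0
  have : (∫ t in Set.Iic (0:ℝ), phi t) = 1/2 := by linarith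
  rw [← h, this, hx]
  ring

lemma interval_exp_le {x : ℝ} (hx : 0 ≤ x) :
    (∫ t in (0:ℝ)..x, Real.exp (-t ^ 2 / 2)) ≤ x := by
  have h := intervalIntegral.integral_mono_on (μ := volume) hx
    ((Continuous.intervalIntegrable (by fun_prop : Continuous fun t : ℝ => Real.exp (-t ^ 2 / 2)) 0 x))
    (intervalIntegrable_const (c := (1:ℝ)))
    (fun t ht => by
      have : -t ^ 2 / 2 ≤ 0 := by nlinarith [sq_nonneg t]
      calc Real.exp (-t ^ 2 / 2) ≤ Real.exp 0 := Real.exp_le_exp.2 this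
        _ = 1 := Real.exp_zero)
  simpa using h

lemma interval_exp_ge {x : ℝ} (hx : 0 ≤ x) :
    x - x ^ 3 / 6 ≤ ∫ t in (0:ℝ)..x, Real.exp (-t ^ 2 / 2) := by
  have h := intervalIntegral.integral_mono_on (μ := volume) hx
    ((continuous_const.sub ((continuous_pow 2).div_const 2)).intervalIntegrable 0 x)
    ((Continuous.intervalIntegrable (by fun_prop : Continuous fun t : ℝ => Real.exp (-t ^ 2 / 2)) 0 x))
    (fun t ht => by
      have := Real.add_one_le_exp (-t ^ 2 / 2)
      calc (1:ℝ) - t ^ 2 / 2 = -t ^ 2 / 2 + 1 := by ring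
        _ ≤ Real.exp (-t ^ 2 / 2) := this)
  have hcomp : (∫ t in (0:ℝ)..x, (1 - t ^ 2 / 2)) = x - x ^ 3 / 6 := by
    rw [intervalIntegral.integral_sub intervalIntegrable_const
      (((continuous_pow 2).div_const 2).intervalIntegrable 0 x)]
    simp [intervalIntegral.integral_div]
    ring
  rw [← hcomp]
  exact h

lemma interval_exp_nonneg {x : ℝ} (hx : 0 ≤ x) :
    0 ≤ ∫ t in (0:ℝ)..x, Real.exp (-t ^ 2 / 2) := by
  apply intervalIntegral.integral_nonneg hx
  intro t _
  positivity

set_option maxHeartbeats 1200000 in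
lemma key_nonneg {x : ℝ} (hx : 0 ≤ x) :
    |binH (gaussQ x) - (Real.log 2 - x ^ 2 / Real.pi)|
      ≤ 4 * (Real.pi - 1) / (3 * Real.pi ^ 2) * x ^ 4 := by
  have hπ : (0:ℝ) < Real.pi := Real.pi_pos
  have hπ3 : (3:ℝ) < Real.pi := Real.pi_gt_three
  obtain ⟨s, hs⟩ : ∃ s : ℝ, s = Real.sqrt (2 * Real.pi) := ⟨_, rfl⟩
  have hs0 : 0 < s := hs ▸ Real.sqrt_pos.2 (by positivity)
  have hs2 : s ^ 2 = 2 * Real.pi := hs ▸ Real.sq_sqrt (by positivity)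
  obtain ⟨I, hIdef⟩ : ∃ I : ℝ, I = ∫ t in (0:ℝ)..x, Real.exp (-t ^ 2 / 2) := ⟨_, rfl⟩
  have hphiI : (∫ t in (0:ℝ)..x, phi t) = s⁻¹ * I := by
    rw [hs, hIdef]
    simp only [phi]
    exact intervalIntegral.integral_const_mul _ _
  obtain ⟨E, hEdef⟩ : ∃ E : ℝ, E = 1 - 2 * gaussQ x := ⟨_, rfl⟩
  have hE : E = 2 * (s⁻¹ * I) := by rw [hEdef, gaussQ_sub, hphiI]
  have hq0 : 0 < gaussQ x := gaussQ_pos x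
  have hq1 : gaussQ x < 1 := gaussQ_lt_one x
  have hE1 : E < 1 := by rw [hEdef]; linarith
  have hEm1 : -1 < E := by rw [hEdef]; linarith
  have hI0 : 0 ≤ I := hIdef ▸ interval_exp_nonneg hx
  have hIx : I ≤ x := hIdef ▸ interval_exp_le hx
  have hIl : x - x ^ 3 / 6 ≤ I := hIdef ▸ interval_exp_ge hx
  have hE0 : 0 ≤ E := by rw [hE]; positivity
  have hE2 : E ^ 2 = 2 * I ^ 2 / Real.pi := by
    rw [hE, mul_pow, mul_pow, inv_pow, hs2]
    field_simp
  have hbin : binH (gaussQ x) = Real.log 2 - gfun E := by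
    rw [hEdef]
    exact binH_eq_gfun hq0 hq1
  rw [hbin]
  have hexpr : Real.log 2 - gfun E - (Real.log 2 - x ^ 2 / Real.pi)
      = x ^ 2 / Real.pi - gfun E := by ring
  rw [hexpr, abs_le]
  have hI2x2 : I ^ 2 ≤ x ^ 2 := by nlinarith
  constructor
  · -- lower bound
    rcases le_or_gt (x ^ 2) (6 / 5) with hx2 | hx2
    · have hpi314 : (3.14:ℝ) < Real.pi := Real.pi_gt_d2
      have hEsq : E ^ 2 ≤ 7 / 9 := by
        rw [hE2, div_le_iff₀ hπ]
        nlinarith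
      have hg := gfun_le hE0 hEsq
      have hE22 : E ^ 2 / 2 = I ^ 2 / Real.pi := by rw [hE2]; ring
      have hE22' : I ^ 2 / Real.pi ≤ x ^ 2 / Real.pi := by gcongr
      have hE4 : E ^ 4 = 4 * I ^ 4 / Real.pi ^ 2 := by
        have h44 : E ^ 4 = (E ^ 2) ^ 2 := by ring
        rw [h44, hE2, div_pow]
        ring
      have hI4 : I ^ 4 ≤ x ^ 4 := by nlinarith
      have hE4' : E ^ 4 ≤ 4 * x ^ 4 / Real.pi ^ 2 := by rw [hE4]; gcongr
      have hE4'' : 3 / 8 * E ^ 4 ≤ 3 / 8 * (4 * x ^ 4 / Real.pi ^ 2) := by linarith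
      have hco : 3 / 8 * (4 * x ^ 4 / Real.pi ^ 2)
          ≤ 4 * (Real.pi - 1) / (3 * Real.pi ^ 2) * x ^ 4 := by
        have hcoef : 3 / (2 * Real.pi ^ 2) ≤ 4 * (Real.pi - 1) / (3 * Real.pi ^ 2) := by
          rw [div_le_div_iff₀ (by positivity) (by positivity)]
          nlinarith
        calc 3 / 8 * (4 * x ^ 4 / Real.pi ^ 2) = 3 / (2 * Real.pi ^ 2) * x ^ 4 := by ring
          _ ≤ _ := mul_le_mul_of_nonneg_right hcoef (by positivity)
      linarith
    · have hg := gfun_le_log_two hE0 hE1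
      have hx2' : (6:ℝ)/5 ≤ x ^ 2 := le_of_lt hx2
      have hx4 : (36:ℝ)/25 ≤ x ^ 4 := by nlinarith
      have hπl : (3.141592:ℝ) < Real.pi := Real.pi_gt_d6
      have hπu : Real.pi < 3.141593 := Real.pi_lt_d6
      have hπsq : Real.pi ^ 2 < 9.8696078 := by nlinarith [Real.pi_pos]
      have hlog : Real.log 2 < 0.6931471808 := Real.log_two_lt_d9
      have hC : (0.28:ℝ) ≤ 4 * (Real.pi - 1) / (3 * Real.pi ^ 2) := by
        rw [le_div_iff₀ (by positivity)]
        nlinarith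
      have h1 : (0.28:ℝ) * (36/25) ≤ 4 * (Real.pi - 1) / (3 * Real.pi ^ 2) * x ^ 4 :=
        mul_le_mul hC hx4 (by norm_num) (by positivity)
      have h2 : (0.38:ℝ) ≤ x ^ 2 / Real.pi := by
        rw [le_div_iff₀ hπ]
        nlinarith
      linarith
  · -- upper bound
    have hg := gfun_ge hE0 hE1
    have h2 : x ^ 2 / Real.pi - gfun E ≤ (x ^ 2 - I ^ 2) / Real.pi := by
      have hE22 : E ^ 2 / 2 = I ^ 2 / Real.pi := by rw [hE2]; ring
      rw [sub_div]
      have : I ^ 2 / Real.pi ≤ gfun E := by rw [← hE22]; exact hg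
      linarith
    have h3 : x ^ 2 - I ^ 2 ≤ x ^ 4 / 3 := by
      rcases le_or_gt (x ^ 2) 6 with h6 | h6
      · have hpos : 0 ≤ x - x ^ 3 / 6 := by nlinarith
        have hsq : (x - x ^ 3 / 6) ^ 2 ≤ I ^ 2 := by nlinarith
        nlinarith [pow_nonneg hx 6]
      · nlinarith [sq_nonneg I, sq_nonneg (x ^ 2 - 6)]
    have h4 : (x ^ 2 - I ^ 2) / Real.pi ≤ (x ^ 4 / 3) / Real.pi := by gcongr
    have h5 : (x ^ 4 / 3) / Real.pi ≤ 4 * (Real.pi - 1) / (3 * Real.pi ^ 2) * x ^ 4 := by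
      have hco : 1 / (3 * Real.pi) ≤ 4 * (Real.pi - 1) / (3 * Real.pi ^ 2) := by
        rw [div_le_div_iff₀ (by positivity) (by positivity)]
        nlinarith
      calc (x ^ 4 / 3) / Real.pi = 1 / (3 * Real.pi) * x ^ 4 := by ring
        _ ≤ 4 * (Real.pi - 1) / (3 * Real.pi ^ 2) * x ^ 4 := by
            apply mul_le_mul_of_nonneg_right hco (by positivity)
    linarith

lemma binH_compl (q : ℝ) : binH (1 - q) = binH q := by
  unfold binH
  rw [sub_sub_cancel]
  ring

theorem entropy_Q_taylor_bound (x : ℝ) :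
    |binH (gaussQ x) - (Real.log 2 - x ^ 2 / Real.pi)|
      ≤ 4 * (Real.pi - 1) / (3 * Real.pi ^ 2) * x ^ 4 := by
  rcases le_or_gt 0 x with hx | hx
  · exact key_nonneg hx
  · have h := key_nonneg (x := -x) (by linarith)
    have hQ : gaussQ x = 1 - gaussQ (-x) := by
      have := gaussQ_neg (-x)
      rw [neg_neg] at this
      linarith
    have hb : binH (gaussQ x) = binH (gaussQ (-x)) := by rw [hQ, binH_compl]
    have e2 : (-x) ^ 2 = x ^ 2 := by ring
    have e4 : (-x) ^ 4 = x ^ 4 := by ring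
    rw [e2, e4, ← hb] at h
    exact h
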